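/- Let μ and ν be charges on 𝒜 and let μ̂ and ν̂ be their Stone extensions. Then ν is weakly absolutely continuous with respect to μ (ν ≺ μ) if and only if supp ν ⊆ supp μ, where supp μ is the set of points x ∈ F all of whose open neighborhoods have positive μ̂-measure (and likewise for supp ν). -/

import Mathlib

open Filter Topology MeasureTheory

variable {X : Type*}

/-- A field (algebra) of subsets of `X`. -/
def IsSetField (𝒜 : Set (Set X)) : Prop :=
  ∅ ∈ 𝒜 ∧ Set.univ ∈ 𝒜 ∧ (∀ A ∈ 𝒜, Aᶜ ∈ 𝒜) ∧ ∀ A ∈ 𝒜, ∀ B ∈ 𝒜, A ∪ B ∈ 𝒜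

/-- A σ-algebra of subsets of `X`. -/
def IsSigmaField (𝒜 : Set (Set X)) : Prop :=
  ∅ ∈ 𝒜 ∧ Set.univ ∈ 𝒜 ∧ (∀ A ∈ 𝒜, Aᶜ ∈ 𝒜) ∧
    ∀ A : ℕ → Set X, (∀ n, A n ∈ 𝒜) → (⋃ n, A n) ∈ 𝒜

/-- A (nonnegative, bounded) charge on the field `𝒜`: a nonnegative finitely
additive real-valued set function vanishing on `∅`. -/
def IsCharge (𝒜 : Set (Set X)) (μ : Set X → ℝ) : Prop :=
  μ ∅ = 0 ∧ (∀ A ∈ 𝒜, 0 ≤ μ A) ∧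
    ∀ A ∈ 𝒜, ∀ B ∈ 𝒜, Disjoint A B → μ (A ∪ B) = μ A + μ B

/-- `ν` is absolutely continuous w.r.t. `μ` (ε–δ sense), `ν ≪ μ`. -/
def AbsCont (𝒜 : Set (Set X)) (ν μ : Set X → ℝ) : Prop :=
  ∀ ε : ℝ, 0 < ε → ∃ δ : ℝ, 0 < δ ∧ ∀ A ∈ 𝒜, μ A < δ → ν A < ε

/-- `ν` is weakly absolutely continuous w.r.t. `μ`, `ν ≺ μ`. -/
def WeakAbsCont (𝒜 : Set (Set X)) (ν μ : Set X → ℝ) : Prop :=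
  ∀ A ∈ 𝒜, μ A = 0 → ν A = 0

/-- `μ` and `ν` are singular, `μ ⊥ ν`. -/
def Sing (𝒜 : Set (Set X)) (μ ν : Set X → ℝ) : Prop :=
  ∀ ε : ℝ, 0 < ε → ∃ D ∈ 𝒜, μ D < ε ∧ ν Dᶜ < ε

/-- `μ` and `ν` are strongly singular. -/
def StrongSing (𝒜 : Set (Set X)) (μ ν : Set X → ℝ) : Prop :=
  ∃ D ∈ 𝒜, μ D = 0 ∧ ν Dᶜ = 0

/-- The additive property of a charge: for every `ε > 0` and every increasing
sequence `Aᵢ` in `𝒜` there is `B ∈ 𝒜` with `μ B ≤ lim_i μ (A i) + ε` and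
`μ (A i \ B) = 0` for all `i`. -/
def HasAdditiveProperty (𝒜 : Set (Set X)) (μ : Set X → ℝ) : Prop :=
  ∀ ε : ℝ, 0 < ε → ∀ A : ℕ → Set X, (∀ i, A i ∈ 𝒜) → Monotone A →
    ∃ B ∈ 𝒜, ∃ L : ℝ, Tendsto (fun i => μ (A i)) atTop (𝓝 L) ∧
      μ B ≤ L + ε ∧ ∀ i, μ (A i \ B) = 0

/-- The support of a Borel measure: points all of whose open neighborhoods
have positive measure. -/
def msupp {F : Type*} [TopologicalSpace F] [MeasurableSpace F] (m : Measure F) : Set F :=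
  {x | ∀ U : Set F, IsOpen U → x ∈ U → 0 < m U}

/-- `ν ≺ μ` iff `supp ν ⊆ supp μ` in the Stone space. -/
theorem weakAbsCont_iff_supp_subset
    {F : Type*} [TopologicalSpace F] [CompactSpace F] [T2Space F]
    [TotallyDisconnectedSpace F] [Nonempty F] [MeasurableSpace F] [BorelSpace F]
    (𝒜 : Set (Set X)) (h𝒜 : IsSetField 𝒜)
    (μ ν : Set X → ℝ) (hμ : IsCharge 𝒜 μ) (hν : IsCharge 𝒜 ν)
    (φ : Set X → Set F)
    (hφ_inj : ∀ A ∈ 𝒜, ∀ B ∈ 𝒜, φ A = φ B → A = B)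
    (hφ_clopen : ∀ A ∈ 𝒜, IsClopen (φ A))
    (hφ_surj : ∀ C : Set F, IsClopen C → ∃ A ∈ 𝒜, φ A = C)
    (hφ_empty : φ ∅ = ∅)
    (hφ_univ : φ Set.univ = Set.univ)
    (hφ_union : ∀ A ∈ 𝒜, ∀ B ∈ 𝒜, φ (A ∪ B) = φ A ∪ φ B)
    (hφ_compl : ∀ A ∈ 𝒜, φ Aᶜ = (φ A)ᶜ)
    (μhat νhat : Measure F)
    [IsFiniteMeasure μhat] [μhat.Regular] [IsFiniteMeasure νhat] [νhat.Regular]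
    (hμhat : ∀ A ∈ 𝒜, μhat (φ A) = ENNReal.ofReal (μ A))
    (hνhat : ∀ A ∈ 𝒜, νhat (φ A) = ENNReal.ofReal (ν A)) :
    WeakAbsCont 𝒜 ν μ ↔ msupp νhat ⊆ msupp μhat := by
  constructor
  · intro h x hx U hU hxU
    obtain ⟨C, hC, hxC, hCU⟩ := compact_exists_isClopen_in_isOpen hU hxU
    obtain ⟨A, hA, rfl⟩ := hφ_surj C hC
    have hνpos : 0 < νhat (φ A) := hx _ hC.isOpen hxC
    have hμA : μ A ≠ 0 := by
      intro h0
      have : νhat (φ A) = 0 := by rw [hνhat A hA, h A hA h0, ENNReal.ofReal_zero]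
      simp [this] at hνpos
    have : 0 < μhat (φ A) := by
      rw [hμhat A hA]
      exact ENNReal.ofReal_pos.2 (lt_of_le_of_ne (hμ.2.1 A hA) (Ne.symm hμA))
    exact lt_of_lt_of_le this (measure_mono hCU)
  · intro h A hA hμA
    have hnull : μhat (φ A) = 0 := by rw [hμhat A hA, hμA, ENNReal.ofReal_zero]
    -- no point of φ A is in msupp νhat
    have hnot : ∀ x ∈ φ A, ∃ U : Set F, IsOpen U ∧ x ∈ U ∧ νhat U = 0 := by
      intro x hxA
      by_contra hcon
      push_neg at hcon
      have hxsupp : x ∈ msupp μhat := by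
        apply h
        intro U hU hxU
        rcases lt_or_gt_of_ne (hcon U hU hxU) with h1 | h1
        · exact absurd h1 (by simp)
        · exact h1
      have := hxsupp (φ A) (hφ_clopen A hA).isOpen hxA
      rw [hnull] at this
      exact lt_irrefl _ this
    choose U hUopen hxU hUnull using hnot
    have hcompact : IsCompact (φ A) := (hφ_clopen A hA).isClosed.isCompact
    obtain ⟨t, ht⟩ := hcompact.elim_finite_subcover (fun x : φ A => U x x.2)
      (fun x => hUopen x x.2) (fun x hx => Set.mem_iUnion.2 ⟨⟨x, hx⟩, hxU x hx⟩)
    have hν0 : νhat (φ A) = 0 := by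
      refine le_antisymm ?_ zero_le
      calc νhat (φ A) ≤ νhat (⋃ i ∈ t, U i i.2) := measure_mono ht
        _ = 0 := by
          refine measure_biUnion_null_iff t.countable_toSet |>.2 ?_
          intro i _; exact hUnull i i.2
    rw [hνhat A hA] at hν0
    have := hν.2.1 A hA
    have := ENNReal.ofReal_eq_zero.1 hν0
    linarith
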